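/- Let G be a finite simple graph with no perfect matching, and let ν(G) be the maximum cardinality of a matching of G. Then there exist polynomials Δ_v (one for each vertex v) and Θ_{e,e'} (one for each pair of distinct edges e, e' sharing a vertex) with ∑_{v∈V(G)} Δ_v·((∑_{e∋v} x_e) − 1) + ∑_{e,e'} Θ_{e,e'}·x_e x_{e'} = 1, such that: (a) deg(Δ_v) = ν(G) for every vertex v; (b) for every matching M of G (including the empty matching), the monomial ∏_{e∈M} x_e appears with nonzero coefficient in Δ_v for every vertex v; and (c) deg(Θ_{e,e'}) ≤ ν(G) for all pairs of distinct adjacent edges e, e'. -/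

import Mathlib

open MvPolynomial Finset

/-- The perfect-matching vertex polynomial `(∑_{e ∋ v} x_e) − 1`. -/
noncomputable def pmVertexPoly {V : Type*} [Fintype V] [DecidableEq V]
    (G : SimpleGraph V) [DecidableRel G.Adj] (v : V) :
    MvPolynomial ↥G.edgeSet ℂ :=
  (∑ e ∈ Finset.univ.filter (fun e : ↥G.edgeSet => v ∈ (e : Sym2 V)), X e) - 1

/-- A finset of edges of `G` is a matching: its edges are pairwise disjoint. -/
def IsMatchingFinset {V : Type*} (G : SimpleGraph V)
    (M : Finset ↥G.edgeSet) : Prop :=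
  ∀ e ∈ M, ∀ e' ∈ M, e ≠ e' →
    ¬ ∃ v : V, v ∈ (e : Sym2 V) ∧ v ∈ (e' : Sym2 V)

/-- The matching number `ν(G)`: the maximum cardinality of a matching. -/
noncomputable def matchNum {V : Type*} [Fintype V] [DecidableEq V]
    (G : SimpleGraph V) [DecidableRel G.Adj] : ℕ :=
  sSup {k : ℕ | ∃ M : Finset ↥G.edgeSet, IsMatchingFinset G M ∧ M.card = k}

/-- The sum `∑ Θ_{e,e'} · x_e x_{e'}` over pairs of distinct edges sharing a
vertex. -/
noncomputable def pairSum {V : Type*} [Fintype V] [DecidableEq V]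
    (G : SimpleGraph V) [DecidableRel G.Adj]
    (Θ : ↥G.edgeSet → ↥G.edgeSet → MvPolynomial ↥G.edgeSet ℂ) :
    MvPolynomial ↥G.edgeSet ℂ :=
  ∑ q ∈ (Finset.univ ×ˢ Finset.univ).filter
      (fun q : ↥G.edgeSet × ↥G.edgeSet => q.1 ≠ q.2 ∧
        ∃ v : V, v ∈ (q.1 : Sym2 V) ∧ v ∈ (q.2 : Sym2 V)),
    Θ q.1 q.2 * (X q.1 * X q.2)

set_option linter.unusedSectionVars false
set_option maxHeartbeats 1000000

namespace s17
variable {V : Type*} [Fintype V] [DecidableEq V] (G : SimpleGraph V) [DecidableRel G.Adj]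

instance instDecM : DecidablePred (fun M : Finset ↥G.edgeSet => IsMatchingFinset G M) := by
  intro M; unfold IsMatchingFinset; infer_instance

def inc (v : V) : Finset ↥G.edgeSet := univ.filter (fun e : ↥G.edgeSet => v ∈ (e : Sym2 V))
def Ve (e : ↥G.edgeSet) : Finset V := univ.filter (fun v => v ∈ (e : Sym2 V))
def MM : Finset (Finset ↥G.edgeSet) := univ.filter (fun M => IsMatchingFinset G M)

lemma mem_MM {M : Finset ↥G.edgeSet} : M ∈ MM G ↔ IsMatchingFinset G M := by
  simp [MM]

lemma empty_mem_MM : (∅ : Finset ↥G.edgeSet) ∈ MM G := by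
  simp [mem_MM, IsMatchingFinset]

lemma MM_subset {M M' : Finset ↥G.edgeSet} (h : M ∈ MM G) (hs : M' ⊆ M) : M' ∈ MM G := by
  rw [mem_MM] at *
  exact fun e he e' he' hne => h e (hs he) e' (hs he') hne

lemma mem_Ve {e : ↥G.edgeSet} {v : V} : v ∈ Ve G e ↔ v ∈ (e : Sym2 V) := by simp [Ve]

lemma exists_rep (e : ↥G.edgeSet) : ∃ u w : V, (e : Sym2 V) = s(u,w) ∧ u ≠ w := by
  obtain ⟨u, w, h⟩ : ∃ u w, (e : Sym2 V) = s(u,w) := (e : Sym2 V).ind (fun u w => ⟨u,w,rfl⟩)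
  refine ⟨u, w, h, ?_⟩
  intro huw
  have := G.not_isDiag_of_mem_edgeSet e.prop
  rw [h, Sym2.mk_isDiag_iff] at this
  exact this huw

lemma Ve_eq (e : ↥G.edgeSet) {u w : V} (h : (e : Sym2 V) = s(u,w)) : Ve G e = {u, w} := by
  ext v; simp [Ve, h, Sym2.mem_iff]

lemma card_Ve (e : ↥G.edgeSet) : (Ve G e).card = 2 := by
  obtain ⟨u, w, h, hne⟩ := exists_rep G e
  rw [Ve_eq G e h, Finset.card_insert_of_notMem (by simp [hne]), Finset.card_singleton]

/-- The set of covered vertices. -/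
def cov (M : Finset ↥G.edgeSet) : Finset V := univ.filter (fun v => ∃ e ∈ M, v ∈ (e : Sym2 V))

lemma card_cov {M : Finset ↥G.edgeSet} (hM : M ∈ MM G) : (cov G M).card = 2 * M.card := by
  have : cov G M = M.biUnion (fun e => Ve G e) := by
    ext v; simp [cov, Ve]
  rw [this, Finset.card_biUnion, Finset.sum_congr rfl (fun e _ => card_Ve G e),
    Finset.sum_const, smul_eq_mul, mul_comm]
  intro e he e' he' hne
  rw [Function.onFun, Finset.disjoint_left]
  intro v hv hv'
  exact (mem_MM G).1 hM e he e' he' hne ⟨v, (mem_Ve G).1 hv, (mem_Ve G).1 hv'⟩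

variable (hpm : ¬ ∃ M : Finset ↥G.edgeSet, IsMatchingFinset G M ∧
      ∀ v : V, ∃ e ∈ M, v ∈ (e : Sym2 V))

include hpm in
lemma two_card_lt {M : Finset ↥G.edgeSet} (hM : M ∈ MM G) :
    2 * M.card < Fintype.card V := by
  rcases lt_or_ge (2 * M.card) (Fintype.card V) with h | h
  · exact h
  · exfalso
    have hle : (cov G M).card ≤ Fintype.card V := by
      simpa using Finset.card_le_card (Finset.subset_univ (cov G M))
    rw [card_cov G hM] at hle
    have hcovcard : (cov G M).card = Fintype.card V := by
      rw [card_cov G hM]; omega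
    have : cov G M = univ := Finset.eq_univ_of_card _ (by simpa using hcovcard)
    refine hpm ⟨M, (mem_MM G).1 hM, fun v => ?_⟩
    have : v ∈ cov G M := this ▸ Finset.mem_univ v
    simpa [cov] using this

-- matchNum facts
lemma matchNum_bddAbove : BddAbove {k : ℕ | ∃ M : Finset ↥G.edgeSet, IsMatchingFinset G M ∧ M.card = k} := by
  refine ⟨Fintype.card ↥G.edgeSet, fun k hk => ?_⟩
  obtain ⟨M, _, rfl⟩ := hk
  simpa using Finset.card_le_card (Finset.subset_univ M)

lemma card_le_matchNum {M : Finset ↥G.edgeSet} (hM : M ∈ MM G) : M.card ≤ matchNum G :=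
  le_csSup (matchNum_bddAbove G) ⟨M, (mem_MM G).1 hM, rfl⟩

lemma exists_max_matching : ∃ M ∈ MM G, M.card = matchNum G := by
  have := Nat.sSup_mem (s := {k : ℕ | ∃ M : Finset ↥G.edgeSet, IsMatchingFinset G M ∧ M.card = k})
    ⟨0, ⟨∅, by simp [IsMatchingFinset], rfl⟩⟩ (matchNum_bddAbove G)
  obtain ⟨M, hM, hcard⟩ := this
  exact ⟨M, (mem_MM G).2 hM, hcard⟩

noncomputable def aa (n : ℕ) : ℕ → ℂ
  | 0 => -1 / n
  | (k+1) => ((2*(k+1) : ℕ) : ℂ) / ((n : ℂ) - ((2*(k+1) : ℕ) : ℂ)) * aa n k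

lemma cast_sub_ne (n m : ℕ) (h : m < n) : ((n : ℂ) - (m : ℂ)) ≠ 0 := by
  intro hc
  rw [sub_eq_zero, Nat.cast_inj] at hc
  omega

lemma aa_ne_zero (n : ℕ) : ∀ k : ℕ, (∀ j ≤ k, 2 * j < n) → aa n k ≠ 0
  | 0, h => by
      have hn : 0 < n := by simpa using h 0 le_rfl
      have : (n : ℂ) ≠ 0 := Nat.cast_ne_zero.2 hn.ne'
      simp [aa, this]
  | (k+1), h => by
      have h1 : ((2*(k+1) : ℕ) : ℂ) ≠ 0 := Nat.cast_ne_zero.2 (by omega)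
      have h2 : ((n : ℂ) - ((2*(k+1) : ℕ) : ℂ)) ≠ 0 := cast_sub_ne n _ (h (k+1) le_rfl)
      have ih := aa_ne_zero n k (fun j hj => h j (hj.trans (Nat.le_succ k)))
      simp only [aa]
      exact mul_ne_zero (div_ne_zero h1 h2) ih

lemma aa_rec (n : ℕ) (k : ℕ) (h : ((n : ℂ) - ((2*(k+1) : ℕ) : ℂ)) ≠ 0) :
    ((n : ℂ) - ((2*(k+1) : ℕ) : ℂ)) * aa n (k+1) = ((2*(k+1) : ℕ) : ℂ) * aa n k := by
  simp only [aa]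
  push_cast at h ⊢
  field_simp

/-- A chosen endpoint of each edge. -/
noncomputable def pt (e : ↥G.edgeSet) : V := (exists_rep G e).choose

lemma pt_spec (e : ↥G.edgeSet) : ∃ w, (e : Sym2 V) = s(pt G e, w) := by
  obtain ⟨w, h, _⟩ := (exists_rep G e).choose_spec
  exact ⟨w, h⟩

lemma pt_mem (e : ↥G.edgeSet) : pt G e ∈ (e : Sym2 V) := by
  obtain ⟨w, h⟩ := pt_spec G e
  rw [h]
  exact Sym2.mem_mk_left _ _

/-- Sign of a vertex on an edge. -/
noncomputable def sgn (v : V) (e : ↥G.edgeSet) : ℂ := if v = pt G e then 1 else -1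

lemma sum_sgn (e : ↥G.edgeSet) : ∑ v ∈ Ve G e, sgn G v e = 0 := by
  obtain ⟨u, w, h, hne⟩ := exists_rep G e
  have hpt : pt G e = u ∨ pt G e = w := by
    have := pt_mem G e
    rw [h, Sym2.mem_iff] at this
    exact this
  rw [Ve_eq G e h, Finset.sum_insert (by simp [hne]), Finset.sum_singleton]
  rcases hpt with h1 | h1 <;> simp [sgn, h1, hne, hne.symm]

/-- Generic vertex/edge double-sum swap. -/
lemma swapVE {β : Type*} [AddCommMonoid β] (S : Finset ↥G.edgeSet) (f : V → ↥G.edgeSet → β) :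
    ∑ v : V, ∑ e ∈ S.filter (fun e : ↥G.edgeSet => v ∈ (e : Sym2 V)), f v e
      = ∑ e ∈ S, ∑ v ∈ Ve G e, f v e := by
  simp only [Finset.sum_filter]
  rw [Finset.sum_comm]
  refine Finset.sum_congr rfl fun e _ => ?_
  rw [Ve, Finset.sum_filter]

/-- The coefficient of the matching monomial `M` in `Δ v`. -/
noncomputable def cc (v : V) (M : Finset ↥G.edgeSet) : ℂ :=
  (if ∀ e ∈ M, v ∉ (e : Sym2 V) then aa (Fintype.card V) M.card else 0)
  + ∑ e ∈ M.filter (fun e : ↥G.edgeSet => v ∈ (e : Sym2 V)), sgn G v e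

lemma cc_uncov {v : V} {M : Finset ↥G.edgeSet} (h : ∀ e ∈ M, v ∉ (e : Sym2 V)) :
    cc G v M = aa (Fintype.card V) M.card := by
  have h0 : M.filter (fun e : ↥G.edgeSet => v ∈ (e : Sym2 V)) = ∅ := by
    rw [Finset.filter_eq_empty_iff]; exact h
  unfold cc
  rw [if_pos h, h0, Finset.sum_empty, add_zero]

lemma cc_cov {v : V} {M : Finset ↥G.edgeSet} (hM : M ∈ MM G) {e0 : ↥G.edgeSet}
    (he0 : e0 ∈ M) (hv : v ∈ (e0 : Sym2 V)) :
    cc G v M = sgn G v e0 := by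
  have hfil : M.filter (fun e : ↥G.edgeSet => v ∈ (e : Sym2 V)) = {e0} := by
    ext e
    simp only [Finset.mem_filter, Finset.mem_singleton]
    constructor
    · rintro ⟨he, hve⟩
      by_contra hne
      exact (mem_MM G).1 hM e he e0 he0 hne ⟨v, hve, hv⟩
    · rintro rfl; exact ⟨he0, hv⟩
  have hncov : ¬ ∀ e ∈ M, v ∉ (e : Sym2 V) := fun h => h e0 he0 hv
  unfold cc
  rw [if_neg hncov, hfil, Finset.sum_singleton, zero_add]

include hpm in
lemma aa_card_ne_zero {M : Finset ↥G.edgeSet} (hM : M ∈ MM G) :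
    aa (Fintype.card V) M.card ≠ 0 := by
  apply aa_ne_zero
  intro j hj
  obtain ⟨M', hM'sub, hM'card⟩ := Finset.exists_subset_card_eq (s := M) (n := j) hj
  have := two_card_lt G hpm (MM_subset G hM hM'sub)
  omega

include hpm in
lemma cc_ne_zero {M : Finset ↥G.edgeSet} (hM : M ∈ MM G) (v : V) : cc G v M ≠ 0 := by
  by_cases h : ∀ e ∈ M, v ∉ (e : Sym2 V)
  · rw [cc_uncov G h]; exact aa_card_ne_zero G hpm hM
  · push_neg at h
    obtain ⟨e0, he0, hv⟩ := h
    rw [cc_cov G hM he0 hv]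
    unfold sgn
    split <;> norm_num

include hpm in
lemma sum_cc {M : Finset ↥G.edgeSet} (hM : M ∈ MM G) :
    ∑ v : V, cc G v M
      = ((Fintype.card V : ℂ) - ((2 * M.card : ℕ) : ℂ)) * aa (Fintype.card V) M.card := by
  unfold cc
  rw [Finset.sum_add_distrib]
  have h2 : ∑ v : V, ∑ e ∈ M.filter (fun e : ↥G.edgeSet => v ∈ (e : Sym2 V)), sgn G v e = 0 := by
    rw [swapVE]
    exact Finset.sum_eq_zero fun e _ => sum_sgn G e
  have hfil : univ.filter (fun v => ∀ e ∈ M, v ∉ (e : Sym2 V)) = univ \ cov G M := by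
    ext v
    simp only [Finset.mem_filter, Finset.mem_sdiff, Finset.mem_univ, true_and, cov]
    push_neg
    simp
  have h1 : ∑ v : V, (if ∀ e ∈ M, v ∉ (e : Sym2 V) then aa (Fintype.card V) M.card else 0)
      = ((Fintype.card V : ℂ) - ((2 * M.card : ℕ) : ℂ)) * aa (Fintype.card V) M.card := by
    rw [Finset.sum_ite, Finset.sum_const, Finset.sum_const_zero, add_zero, hfil,
      Finset.card_sdiff_of_subset (Finset.subset_univ _), card_cov G hM]
    rw [nsmul_eq_mul, Finset.card_univ, Nat.cast_sub (le_of_lt (two_card_lt G hpm hM))]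
  rw [h1, h2, add_zero]

-- chunk 3a : dd, Δ, coefficients, degrees groundwork
noncomputable def dd (M : Finset ↥G.edgeSet) : ↥G.edgeSet →₀ ℕ := ∑ e ∈ M, Finsupp.single e 1

lemma dd_apply (M : Finset ↥G.edgeSet) (f : ↥G.edgeSet) :
    dd G M f = if f ∈ M then 1 else 0 := by
  unfold dd
  rw [Finset.sum_apply']
  simp [Finsupp.single_apply]

lemma dd_inj {M M' : Finset ↥G.edgeSet} (h : dd G M = dd G M') : M = M' := by
  ext e
  have := congrFun (congrArg (fun g : ↥G.edgeSet →₀ ℕ => (g : ↥G.edgeSet → ℕ)) h) e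
  simp only [dd_apply] at this
  by_cases h1 : e ∈ M <;> by_cases h2 : e ∈ M' <;> simp_all

lemma dd_sum (M : Finset ↥G.edgeSet) : (dd G M).sum (fun _ k => k) = M.card := by
  rw [Finsupp.sum_fintype _ _ (fun _ => rfl)]
  simp only [dd_apply]
  rw [Finset.sum_ite_mem, Finset.univ_inter, Finset.sum_const, smul_eq_mul, mul_one]

lemma dd_insert {M : Finset ↥G.edgeSet} {e : ↥G.edgeSet} (h : e ∉ M) :
    dd G (insert e M) = dd G M + Finsupp.single e 1 := by
  unfold dd; rw [Finset.sum_insert h, add_comm]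

lemma dd_erase {M : Finset ↥G.edgeSet} {e : ↥G.edgeSet} (h : e ∈ M) :
    dd G M = dd G (M.erase e) + Finsupp.single e 1 := by
  have := dd_insert G (Finset.notMem_erase e M)
  rw [Finset.insert_erase h] at this
  exact this

/-- The polynomials `Δ v`. -/
noncomputable def Dl (v : V) : MvPolynomial ↥G.edgeSet ℂ :=
  ∑ M ∈ MM G, monomial (dd G M) (cc G v M)

lemma coeff_Dl {M : Finset ↥G.edgeSet} (hM : M ∈ MM G) (v : V) :
    (Dl G v).coeff (dd G M) = cc G v M := by
  unfold Dl
  rw [MvPolynomial.coeff_sum]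
  rw [Finset.sum_eq_single M]
  · rw [coeff_monomial, if_pos rfl]
  · intro M' _ hne
    rw [coeff_monomial, if_neg (fun hc => hne (dd_inj G hc))]
  · intro h; exact absurd hM h

include hpm in
lemma totalDegree_Dl (v : V) : (Dl G v).totalDegree = matchNum G := by
  apply le_antisymm
  · refine (totalDegree_finset_sum _ _).trans ?_
    refine Finset.sup_le fun M hM => ?_
    by_cases hc : cc G v M = 0
    · simp [hc]
    · rw [totalDegree_monomial _ hc, dd_sum]
      exact card_le_matchNum G hM
  · obtain ⟨M, hM, hcard⟩ := exists_max_matching G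
    have hco : (Dl G v).coeff (dd G M) ≠ 0 := by
      rw [coeff_Dl G hM]; exact cc_ne_zero G hpm hM v
    have := MvPolynomial.le_totalDegree (p := Dl G v) (s := dd G M)
      (by rwa [MvPolynomial.mem_support_iff])
    rwa [dd_sum, hcard] at this

-- chunk 3b : the main identity
/-- `e` shares a vertex with some edge of `M`. -/
def shares (e : ↥G.edgeSet) (M : Finset ↥G.edgeSet) : Prop :=
  ∃ e' ∈ M, ∃ v : V, v ∈ (e : Sym2 V) ∧ v ∈ (e' : Sym2 V)

instance instDecShares (e : ↥G.edgeSet) (M : Finset ↥G.edgeSet) :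
    Decidable (shares G e M) := by unfold shares; infer_instance

def badE (M : Finset ↥G.edgeSet) : Finset ↥G.edgeSet :=
  univ.filter (fun e => e ∉ M ∧ shares G e M)

def goodE (M : Finset ↥G.edgeSet) : Finset ↥G.edgeSet :=
  univ.filter (fun e => e ∉ M ∧ ¬ shares G e M)

/-- Coefficient `β M e = ∑_{v ∈ e} c v M`. -/
noncomputable def bb (M : Finset ↥G.edgeSet) (e : ↥G.edgeSet) : ℂ :=
  ∑ v ∈ Ve G e, cc G v M

noncomputable def Bad : MvPolynomial ↥G.edgeSet ℂ :=
  ∑ M ∈ MM G, ∑ e ∈ badE G M, monomial (dd G M + Finsupp.single e 1) (bb G M e)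

lemma shares_self {e : ↥G.edgeSet} {M : Finset ↥G.edgeSet} (h : e ∈ M) : shares G e M :=
  ⟨e, h, pt G e, pt_mem G e, pt_mem G e⟩

lemma split_univ (M : Finset ↥G.edgeSet) {β : Type*} [AddCommMonoid β] (g : ↥G.edgeSet → β) :
    ∑ e : ↥G.edgeSet, g e
      = (∑ e ∈ M, g e + ∑ e ∈ badE G M, g e) + ∑ e ∈ goodE G M, g e := by
  have h1 : univ.filter (fun e => e ∈ M) = M := by ext e; simp
  have h2 : badE G M = (univ.filter (fun e => e ∉ M)).filter (fun e => shares G e M) := by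
    rw [Finset.filter_filter]; rfl
  have h3 : goodE G M = (univ.filter (fun e => e ∉ M)).filter (fun e => ¬ shares G e M) := by
    rw [Finset.filter_filter]; rfl
  have key2 := Finset.sum_filter_add_sum_filter_not (univ.filter (fun e => e ∉ M))
    (fun e => shares G e M) g
  rw [← Finset.sum_filter_add_sum_filter_not univ (fun e => e ∈ M) g, h1, h2, h3,
    add_assoc, key2]

lemma bb_mem {M : Finset ↥G.edgeSet} (hM : M ∈ MM G) {e : ↥G.edgeSet} (he : e ∈ M) :
    bb G M e = 0 := by
  unfold bb
  rw [Finset.sum_congr rfl (fun v hv => cc_cov G hM he ((mem_Ve G).1 hv))]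
  exact sum_sgn G e

lemma bb_good {M : Finset ↥G.edgeSet} {e : ↥G.edgeSet} (he : e ∈ goodE G M) :
    bb G M e = 2 * aa (Fintype.card V) M.card := by
  have hng : ¬ shares G e M := by
    simp only [goodE, Finset.mem_filter] at he; exact he.2.2
  unfold bb
  rw [Finset.sum_congr rfl (fun v hv => cc_uncov G (fun e' he' hv' =>
    hng ⟨e', he', v, (mem_Ve G).1 hv, hv'⟩)), Finset.sum_const, card_Ve, nsmul_eq_mul]
  push_cast
  ring

lemma insert_mem_MM {M : Finset ↥G.edgeSet} (hM : M ∈ MM G) {e : ↥G.edgeSet}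
    (he : e ∈ goodE G M) : insert e M ∈ MM G := by
  simp only [goodE, Finset.mem_filter] at he
  obtain ⟨_, heM, hng⟩ := he
  rw [mem_MM] at *
  intro f hf f' hf' hne
  rw [Finset.mem_insert] at hf hf'
  rcases hf with rfl | hf <;> rcases hf' with rfl | hf'
  · exact absurd rfl hne
  · exact fun ⟨v, hv, hv'⟩ => hng ⟨f', hf', v, hv, hv'⟩
  · exact fun ⟨v, hv, hv'⟩ => hng ⟨f, hf, v, hv', hv⟩
  · exact hM f hf f' hf' hne

lemma erase_good {M : Finset ↥G.edgeSet} (hM : M ∈ MM G) {e : ↥G.edgeSet} (he : e ∈ M) :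
    e ∈ goodE G (M.erase e) := by
  simp only [goodE, Finset.mem_filter, Finset.mem_univ, true_and]
  refine ⟨Finset.notMem_erase e M, ?_⟩
  rintro ⟨e', he', v, hv, hv'⟩
  exact (mem_MM G).1 hM e he e' (Finset.mem_of_mem_erase he')
    (Ne.symm (Finset.ne_of_mem_erase he')) ⟨v, hv, hv'⟩

/-- Reindexing `(M, e compatible) ↦ (insert e M, e)`. -/
lemma good_reindex :
    ∑ M ∈ MM G, ∑ e ∈ goodE G M, monomial (dd G (insert e M)) (2 * aa (Fintype.card V) M.card)
      = ∑ M ∈ MM G, ∑ e ∈ M, monomial (dd G M) (2 * aa (Fintype.card V) (M.card - 1)) := by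
  rw [Finset.sum_sigma' (MM G) (fun M => goodE G M), Finset.sum_sigma' (MM G) (fun M => M)]
  refine Finset.sum_nbij' (fun p => ⟨insert p.2 p.1, p.2⟩) (fun p => ⟨p.1.erase p.2, p.2⟩)
    ?_ ?_ ?_ ?_ ?_
  · rintro ⟨M, e⟩ hp
    rw [Finset.mem_sigma] at hp ⊢
    exact ⟨insert_mem_MM G hp.1 hp.2, Finset.mem_insert_self _ _⟩
  · rintro ⟨M, e⟩ hp
    rw [Finset.mem_sigma] at hp ⊢
    exact ⟨MM_subset G hp.1 (Finset.erase_subset _ _), erase_good G hp.1 hp.2⟩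
  · rintro ⟨M, e⟩ hp
    rw [Finset.mem_sigma] at hp
    have heM : e ∉ M := by
      simp only [goodE, Finset.mem_filter] at hp; exact hp.2.2.1
    simp [Finset.erase_insert heM]
  · rintro ⟨M, e⟩ hp
    rw [Finset.mem_sigma] at hp
    simp [Finset.insert_erase hp.2]
  · rintro ⟨M, e⟩ hp
    rw [Finset.mem_sigma] at hp
    have heM : e ∉ M := by
      simp only [goodE, Finset.mem_filter] at hp; exact hp.2.2.1
    simp only []
    congr 1
    rw [Finset.card_insert_of_notMem heM]
    simp

lemma step1 :
    ∑ v : V, Dl G v * pmVertexPoly G v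
      = (∑ M ∈ MM G, ∑ e : ↥G.edgeSet,
          monomial (dd G M + Finsupp.single e 1) (bb G M e))
        - ∑ M ∈ MM G, monomial (dd G M) (∑ v : V, cc G v M) := by
  have hpm' : ∀ v : V, pmVertexPoly G v = (∑ e ∈ inc G v, X e) - 1 := fun v => rfl
  have hexp : ∀ v : V, Dl G v * pmVertexPoly G v
      = (∑ e ∈ inc G v, ∑ M ∈ MM G,
          monomial (dd G M + Finsupp.single e 1) (cc G v M)) - Dl G v := by
    intro v
    rw [hpm', mul_sub, mul_one, Finset.mul_sum]
    congr 1
    refine Finset.sum_congr rfl fun e _ => ?_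
    unfold Dl
    rw [Finset.sum_mul]
    refine Finset.sum_congr rfl fun M _ => ?_
    rw [show (X e : MvPolynomial ↥G.edgeSet ℂ) = monomial (Finsupp.single e 1) 1 from rfl,
      monomial_mul, mul_one]
  rw [Finset.sum_congr rfl (fun v _ => hexp v), Finset.sum_sub_distrib]
  congr 1
  · rw [show (inc G : V → Finset ↥G.edgeSet)
        = (fun v => univ.filter (fun e : ↥G.edgeSet => v ∈ (e : Sym2 V))) from rfl,
      swapVE G univ (fun v e => ∑ M ∈ MM G,
        monomial (dd G M + Finsupp.single e 1) (cc G v M))]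
    have hinner : ∀ e : ↥G.edgeSet,
        ∑ v ∈ Ve G e, ∑ M ∈ MM G, monomial (dd G M + Finsupp.single e 1) (cc G v M)
          = ∑ M ∈ MM G, monomial (dd G M + Finsupp.single e 1) (bb G M e) := by
      intro e
      rw [Finset.sum_comm]
      refine Finset.sum_congr rfl fun M _ => ?_
      unfold bb
      exact (map_sum (monomial (dd G M + Finsupp.single e 1)) (fun v => cc G v M) (Ve G e)).symm
    rw [Finset.sum_congr rfl (fun e _ => hinner e), Finset.sum_comm]
  · unfold Dl
    rw [Finset.sum_comm]
    refine Finset.sum_congr rfl fun M _ => ?_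
    exact (map_sum (monomial (dd G M)) (fun v => cc G v M) univ).symm

include hpm in
lemma gamma_eq {M : Finset ↥G.edgeSet} (hM : M ∈ MM G) :
    (M.card : ℂ) * (2 * aa (Fintype.card V) (M.card - 1))
        - ((Fintype.card V : ℂ) - ((2 * M.card : ℕ) : ℂ)) * aa (Fintype.card V) M.card
      = if M = ∅ then 1 else 0 := by
  by_cases hem : M = ∅
  · subst hem
    have hn : 0 < Fintype.card V := by
      have := two_card_lt G hpm (empty_mem_MM G)
      omega
    have hn' : ((Fintype.card V : ℂ)) ≠ 0 := Nat.cast_ne_zero.2 hn.ne'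
    rw [if_pos rfl, Finset.card_empty]
    norm_num
    rw [show aa (Fintype.card V) 0 = -1 / (Fintype.card V : ℂ) from rfl]
    field_simp
  · rw [if_neg hem]
    obtain ⟨j, hj⟩ : ∃ j, M.card = j + 1 := by
      have := Finset.card_pos.2 (Finset.nonempty_of_ne_empty hem)
      exact ⟨M.card - 1, by omega⟩
    have hlt := two_card_lt G hpm hM
    have hne : ((Fintype.card V : ℂ) - ((2 * (j+1) : ℕ) : ℂ)) ≠ 0 :=
      cast_sub_ne _ _ (by omega)
    have hrec := aa_rec (Fintype.card V) j hne
    rw [hj]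
    simp only [Nat.add_sub_cancel]
    rw [sub_eq_zero, hrec]
    push_cast
    ring

include hpm in
lemma main_identity :
    ∑ v : V, Dl G v * pmVertexPoly G v = 1 + Bad G := by
  rw [step1]
  have hsplit : ∀ M ∈ MM G,
      ∑ e : ↥G.edgeSet, monomial (dd G M + Finsupp.single e 1) (bb G M e)
        = (∑ e ∈ badE G M, monomial (dd G M + Finsupp.single e 1) (bb G M e))
          + ∑ e ∈ goodE G M, monomial (dd G (insert e M)) (2 * aa (Fintype.card V) M.card) := by
    intro M hM
    rw [split_univ G M]
    have hm0 : ∑ e ∈ M, monomial (dd G M + Finsupp.single e 1) (bb G M e) = 0 :=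
      Finset.sum_eq_zero fun e he => by rw [bb_mem G hM he, map_zero]
    rw [hm0, zero_add]
    congr 1
    refine Finset.sum_congr rfl fun e he => ?_
    have heM : e ∉ M := by
      simp only [goodE, Finset.mem_filter] at he; exact he.2.1
    rw [bb_good G he, dd_insert G heM]
  rw [Finset.sum_congr rfl hsplit, Finset.sum_add_distrib]
  have hgood : ∑ M ∈ MM G, ∑ e ∈ goodE G M,
      monomial (dd G (insert e M)) (2 * aa (Fintype.card V) M.card)
        = ∑ M ∈ MM G, monomial (dd G M)
            ((M.card : ℂ) * (2 * aa (Fintype.card V) (M.card - 1))) := by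
    rw [good_reindex]
    refine Finset.sum_congr rfl fun M _ => ?_
    rw [Finset.sum_const, ← map_nsmul (monomial (dd G M)) M.card
      (2 * aa (Fintype.card V) (M.card - 1)), nsmul_eq_mul]
  rw [hgood]
  rw [Finset.sum_congr rfl (fun M hM => by rw [sum_cc G hpm hM] :
    ∀ M ∈ MM G, monomial (dd G M) (∑ v : V, cc G v M)
      = monomial (dd G M) (((Fintype.card V : ℂ) - ((2 * M.card : ℕ) : ℂ))
          * aa (Fintype.card V) M.card))]
  rw [add_sub_assoc, ← Finset.sum_sub_distrib]
  have hone : ∑ M ∈ MM G,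
      (monomial (dd G M) ((M.card : ℂ) * (2 * aa (Fintype.card V) (M.card - 1)))
        - monomial (dd G M) (((Fintype.card V : ℂ) - ((2 * M.card : ℕ) : ℂ))
            * aa (Fintype.card V) M.card)) = 1 := by
    have hterm : ∀ M ∈ MM G,
        (monomial (dd G M) ((M.card : ℂ) * (2 * aa (Fintype.card V) (M.card - 1)))
          - monomial (dd G M) (((Fintype.card V : ℂ) - ((2 * M.card : ℕ) : ℂ))
              * aa (Fintype.card V) M.card))
          = monomial (dd G M) (if M = ∅ then 1 else 0) := by
      intro M hM
      rw [← map_sub, gamma_eq G hpm hM]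
    rw [Finset.sum_congr rfl hterm, Finset.sum_eq_single (∅ : Finset ↥G.edgeSet)]
    · rw [if_pos rfl, show dd G (∅ : Finset ↥G.edgeSet) = 0 from Finset.sum_empty,
        monomial_zero', C_1]
    · intro M _ hne
      rw [if_neg hne, map_zero]
    · intro h; exact absurd (empty_mem_MM G) h
  rw [hone, add_comm]
  rfl

-- chunk 3d : Θ
noncomputable def sel (M : Finset ↥G.edgeSet) (e : ↥G.edgeSet) : ↥G.edgeSet :=
  if h : shares G e M then h.choose else e

lemma sel_spec {M : Finset ↥G.edgeSet} {e : ↥G.edgeSet} (h : shares G e M) :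
    sel G M e ∈ M ∧ ∃ v : V, v ∈ (e : Sym2 V) ∧ v ∈ ((sel G M e : ↥G.edgeSet) : Sym2 V) := by
  unfold sel
  rw [dif_pos h]
  exact h.choose_spec

noncomputable def fib (q : ↥G.edgeSet × ↥G.edgeSet) : Finset (Finset ↥G.edgeSet) :=
  (MM G).filter (fun M => q.1 ∉ M ∧ shares G q.1 M ∧ sel G M q.1 = q.2)

noncomputable def Th (e₁ e₂ : ↥G.edgeSet) : MvPolynomial ↥G.edgeSet ℂ :=
  - ∑ M ∈ fib G (e₁, e₂), monomial (dd G (M.erase e₂)) (bb G M e₁)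

lemma totalDegree_Th (e₁ e₂ : ↥G.edgeSet) : (Th G e₁ e₂).totalDegree ≤ matchNum G := by
  unfold Th
  rw [totalDegree_neg]
  refine (totalDegree_finset_sum _ _).trans (Finset.sup_le fun M hM => ?_)
  have hMM : M ∈ MM G := (Finset.mem_filter.1 hM).1
  by_cases hc : bb G M e₁ = 0
  · simp [hc]
  · rw [totalDegree_monomial _ hc, dd_sum]
    exact le_trans (Finset.card_le_card (Finset.erase_subset _ _)) (card_le_matchNum G hMM)

lemma pairSum_Th : pairSum G (Th G) = - Bad G := by
  unfold pairSum
  have hterm : ∀ q ∈ (Finset.univ ×ˢ Finset.univ).filter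
      (fun q : ↥G.edgeSet × ↥G.edgeSet => q.1 ≠ q.2 ∧
        ∃ v : V, v ∈ (q.1 : Sym2 V) ∧ v ∈ (q.2 : Sym2 V)),
      Th G q.1 q.2 * (X q.1 * X q.2)
        = - ∑ M ∈ fib G (q.1, q.2),
            monomial (dd G M + Finsupp.single q.1 1) (bb G M q.1) := by
    intro q _
    unfold Th
    rw [neg_mul, Finset.sum_mul]
    refine congrArg Neg.neg (Finset.sum_congr rfl fun M hM => ?_)
    obtain ⟨hMM, h1, h2, h3⟩ : M ∈ MM G ∧ q.1 ∉ M ∧ shares G q.1 M ∧ sel G M q.1 = q.2 := by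
      have := Finset.mem_filter.1 hM
      exact ⟨this.1, this.2⟩
    have hq2M : q.2 ∈ M := h3 ▸ (sel_spec G h2).1
    rw [show (X q.1 : MvPolynomial ↥G.edgeSet ℂ) = monomial (Finsupp.single q.1 1) 1 from rfl,
      show (X q.2 : MvPolynomial ↥G.edgeSet ℂ) = monomial (Finsupp.single q.2 1) 1 from rfl,
      monomial_mul, monomial_mul, mul_one, mul_one]
    congr 1
    rw [dd_erase G hq2M]
    abel
  rw [Finset.sum_congr rfl hterm, Finset.sum_neg_distrib]
  refine congrArg Neg.neg ?_
  unfold Bad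
  rw [Finset.sum_sigma' _ (fun q => fib G q)
      (fun q M => monomial (dd G M + Finsupp.single q.1 1) (bb G M q.1)),
    Finset.sum_sigma' (MM G) (fun M => badE G M)
      (fun M e => monomial (dd G M + Finsupp.single e 1) (bb G M e))]
  refine Finset.sum_nbij' (fun p => ⟨p.2, p.1.1⟩)
    (fun p => ⟨(p.2, sel G p.1 p.2), p.1⟩) ?_ ?_ ?_ ?_ ?_
  · rintro ⟨q, M⟩ hp
    rw [Finset.mem_sigma] at hp
    obtain ⟨hq, hM⟩ := hp
    obtain ⟨hMM, h1, h2, _⟩ : M ∈ MM G ∧ q.1 ∉ M ∧ shares G q.1 M ∧ sel G M q.1 = q.2 := by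
      have := Finset.mem_filter.1 hM
      exact ⟨this.1, this.2⟩
    rw [Finset.mem_sigma]
    refine ⟨hMM, ?_⟩
    simp only [badE, Finset.mem_filter, Finset.mem_univ, true_and]
    exact ⟨h1, h2⟩
  · rintro ⟨M, e⟩ hp
    rw [Finset.mem_sigma] at hp
    obtain ⟨hMM, he⟩ := hp
    have he' : e ∉ M ∧ shares G e M := by
      simpa only [badE, Finset.mem_filter, Finset.mem_univ, true_and] using he
    obtain ⟨hsel, v, hv1, hv2⟩ := sel_spec G he'.2
    rw [Finset.mem_sigma]
    dsimp only
    constructor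
    · rw [Finset.mem_filter]
      refine ⟨Finset.mem_product.2 ⟨Finset.mem_univ _, Finset.mem_univ _⟩, ?_, v, hv1, hv2⟩
      intro hc
      have hc' : e = sel G M e := hc
      apply he'.1
      rw [hc']
      exact hsel
    · rw [fib, Finset.mem_filter]
      exact ⟨hMM, he'.1, he'.2, rfl⟩
  · rintro ⟨⟨e1, e2⟩, M⟩ hp
    rw [Finset.mem_sigma] at hp
    have h3 : sel G M e1 = e2 := ((Finset.mem_filter.1 hp.2).2).2.2
    dsimp only
    rw [h3]
  · rintro ⟨M, e⟩ _
    rfl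
  · rintro ⟨q, M⟩ _
    rfl

end s17


/-- If `G` has no perfect matching, there is a
Nullstellensatz certificate `∑ Δ_v·((∑_{e∋v} x_e) − 1) + ∑ Θ_{e,e'}·x_e x_{e'} = 1`
such that (a) `deg Δ_v = ν(G)` for every `v`; (b) for every matching `M` the
monomial `∏_{e∈M} x_e` appears with nonzero coefficient in every `Δ_v`;
(c) `deg Θ_{e,e'} ≤ ν(G)`. -/
theorem stmt17 {V : Type*} [Fintype V] [DecidableEq V] (G : SimpleGraph V)
    [DecidableRel G.Adj]
    (hpm : ¬ ∃ M : Finset ↥G.edgeSet, IsMatchingFinset G M ∧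
      ∀ v : V, ∃ e ∈ M, v ∈ (e : Sym2 V)) :
    ∃ (Δ : V → MvPolynomial ↥G.edgeSet ℂ)
      (Θ : ↥G.edgeSet → ↥G.edgeSet → MvPolynomial ↥G.edgeSet ℂ),
      (∑ v : V, Δ v * pmVertexPoly G v) + pairSum G Θ = 1 ∧
      (∀ v : V, (Δ v).totalDegree = matchNum G) ∧
      (∀ M : Finset ↥G.edgeSet, IsMatchingFinset G M →
        ∀ v : V, (Δ v).coeff (∑ e ∈ M, Finsupp.single e 1) ≠ 0) ∧
      (∀ e e' : ↥G.edgeSet, e ≠ e' →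
        (∃ v : V, v ∈ (e : Sym2 V) ∧ v ∈ (e' : Sym2 V)) →
        (Θ e e').totalDegree ≤ matchNum G) := by
  refine ⟨s17.Dl G, s17.Th G, ?_, fun v => s17.totalDegree_Dl G hpm v, ?_, ?_⟩
  · rw [s17.main_identity G hpm, s17.pairSum_Th G]
    ring
  · intro M hM v
    rw [show (∑ e ∈ M, Finsupp.single e 1) = s17.dd G M from rfl,
      s17.coeff_Dl G ((s17.mem_MM G).2 hM) v]
    exact s17.cc_ne_zero G hpm ((s17.mem_MM G).2 hM) v
  · intro e e' _ _
    exact s17.totalDegree_Th G e e'
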